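/- Let A ⊆ ℤ^d be a finite set containing points v₁,…,v_{d+1} whose lifts ṽ₁,…,ṽ_{d+1} are linearly independent, such that the convex hull Δ_A equals the simplex with vertices v₁,…,v_{d+1}. Let C_A = span_ℕ{ã : a ∈ A} ⊆ ℤ^{d+1} be the cone of A, let Λ = span_ℤ(ṽ₁,…,ṽ_{d+1}), and let N_Λ = [ℤ^{d+1} : Λ]. If (α, M) ∈ C_A (with M its last coordinate, the height) is minimal, meaning that (α, M) − ṽᵢ ∉ C_A for every i = 1,…,d+1, then M ≤ N_Λ − 1. -/

import Mathlib

/-- The lift of `v ∈ ℤ^d` to `ṽ = (v, 1) ∈ ℤ^{d+1}`. -/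
def liftZ {d : ℕ} (u : Fin d → ℤ) : Fin (d + 1) → ℤ := Fin.snoc u 1

/-- The coercion of an integer point to a real point. -/
def castR {d : ℕ} (u : Fin d → ℤ) : Fin d → ℝ := fun i => (u i : ℝ)

/-- The cone of a set `A ⊆ ℤ^d`: the ℕ-span of the lifts of the elements of `A`. -/
def coneOf {d : ℕ} (A : Set (Fin d → ℤ)) : AddSubmonoid (Fin (d + 1) → ℤ) :=
  AddSubmonoid.closure (liftZ '' A)

namespace MinHeightAux

open Finset

lemma castR_zero {d : ℕ} : castR (0 : Fin d → ℤ) = 0 := by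
  funext i; simp [castR]

lemma castR_add {d : ℕ} (a b : Fin d → ℤ) : castR (a + b) = castR a + castR b := by
  funext i; simp [castR]

lemma castR_zsmul {d : ℕ} (c : ℤ) (a : Fin d → ℤ) : castR (c • a) = (c : ℝ) • castR a := by
  funext i; simp [castR]

lemma liftZ_last {d : ℕ} (u : Fin d → ℤ) : liftZ u (Fin.last d) = 1 := Fin.snoc_last _ _

lemma liftZ_castSucc {d : ℕ} (u : Fin d → ℤ) (i : Fin d) :
    liftZ u (Fin.castSucc i) = u i := Fin.snoc_castSucc _ _ _

lemma sum_last_eq_length {d : ℕ} (A : Set (Fin d → ℤ)) (l : List (Fin (d + 1) → ℤ))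
    (h : ∀ w ∈ l, w ∈ liftZ '' A) : l.sum (Fin.last d) = l.length := by
  induction l with
  | nil => simp
  | cons a t ih =>
    obtain ⟨u, _, rfl⟩ := h a (List.mem_cons_self)
    have ht := ih (fun w hw => h w (List.mem_cons_of_mem _ hw))
    simp only [List.sum_cons, Pi.add_apply, liftZ_last, List.length_cons, ht]
    push_cast
    ring

end MinHeightAux

open MinHeightAux Finset in
theorem minimal_element_height_bound
    (d : ℕ) (A : Set (Fin d → ℤ)) (hAfin : A.Finite)
    (v : Fin (d + 1) → Fin d → ℤ) (hvA : ∀ j, v j ∈ A)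
    (hli : LinearIndependent ℤ fun j => liftZ (v j))
    (hsimplex : convexHull ℝ (castR '' A) = convexHull ℝ (Set.range fun j => castR (v j)))
    (x : Fin (d + 1) → ℤ) (hx : x ∈ coneOf A)
    (hmin : ∀ j, x - liftZ (v j) ∉ coneOf A) :
    x (Fin.last d) ≤ ((AddSubgroup.closure (Set.range fun j => liftZ (v j))).index : ℤ) - 1 := by
  classical
  set g : Fin (d + 1) → (Fin (d + 1) → ℤ) := fun j => liftZ (v j) with hgdef
  set Λ : AddSubgroup (Fin (d + 1) → ℤ) := AddSubgroup.closure (Set.range g) with hΛdef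
  -- the integer matrix of the lifted vectors
  set M : Matrix (Fin (d + 1)) (Fin (d + 1)) ℤ := Matrix.of (fun i j => g j i) with hMdef
  have hmulVec : ∀ c : Fin (d + 1) → ℤ, M.mulVec c = ∑ j, c j • g j := by
    intro c; funext i
    simp [Matrix.mulVec, dotProduct, hMdef, Finset.sum_apply, mul_comm]
  have hdet : M.det ≠ 0 := by
    intro h0
    obtain ⟨c, hc0, hc⟩ := Matrix.exists_mulVec_eq_zero_iff.mpr h0
    refine hc0 (funext fun j => ?_)
    exact Fintype.linearIndependent_iff.mp hli c (by rw [← hmulVec, hc]) j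
  -- the real vectors and their linear independence
  set e : Fin (d + 1) → (Fin (d + 1) → ℝ) := fun j => castR (g j) with hedef
  set Mr : Matrix (Fin (d + 1)) (Fin (d + 1)) ℝ := (Int.castRingHom ℝ).mapMatrix M with hMrdef
  have hdetr : Mr.det ≠ 0 := by
    rw [hMrdef, ← RingHom.map_det]
    simpa using hdet
  have hmulVecr : ∀ c : Fin (d + 1) → ℝ, Mr.mulVec c = ∑ j, c j • e j := by
    intro c; funext i
    simp [Matrix.mulVec, dotProduct, hMrdef, hMdef, hedef, castR,
      Finset.sum_apply, mul_comm]
  have hlir : LinearIndependent ℝ e := by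
    rw [Fintype.linearIndependent_iff]
    intro c hc j
    by_contra hcj
    exact hdetr (Matrix.exists_mulVec_eq_zero_iff.mp
      ⟨c, fun h => hcj (congrFun h j), by rw [hmulVecr, hc]⟩)
  have hcardeq : Fintype.card (Fin (d + 1)) = Module.finrank ℝ (Fin (d + 1) → ℝ) := by simp
  set B : Module.Basis (Fin (d + 1)) ℝ (Fin (d + 1) → ℝ) :=
    basisOfLinearIndependentOfCardEqFinrank hlir hcardeq with hBdef
  have hB : ∀ j, B j = e j := fun j => by
    rw [hBdef, coe_basisOfLinearIndependentOfCardEqFinrank]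
  have hreprSum : ∀ (t : Fin (d + 1) → ℝ) (j0 : Fin (d + 1)),
      B.repr (∑ j, t j • e j) j0 = t j0 := by
    intro t j0
    have h1 : (∑ j, t j • e j) = ∑ j, t j • B j := by simp [hB]
    rw [h1, map_sum]
    simp [Module.Basis.repr_self, Finsupp.single_apply]
  -- coordinates of lifted points of A are nonnegative
  have hgen : ∀ a ∈ A, ∀ j, 0 ≤ B.repr (castR (liftZ a)) j := by
    intro a ha j
    have h1 : castR a ∈ convexHull ℝ (Set.range fun j => castR (v j)) := by
      rw [← hsimplex]; exact subset_convexHull ℝ _ ⟨a, ha, rfl⟩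
    rw [mem_convexHull_iff_exists_fintype] at h1
    obtain ⟨ι, _, w, zz, hw0, hw1, hz, hsum⟩ := h1
    choose jj hjj using hz
    set t : Fin (d + 1) → ℝ := fun j0 => ∑ i ∈ univ.filter (fun i => jj i = j0), w i with htdef
    have ht0 : ∀ j0, 0 ≤ t j0 := fun j0 => Finset.sum_nonneg fun i _ => hw0 i
    have ht1 : ∑ j0, t j0 = 1 := by
      rw [htdef]
      rw [Finset.sum_fiberwise univ jj w]
      exact hw1
    have htsum : ∑ j0, t j0 • castR (v j0) = castR a := by
      rw [← hsum, ← Finset.sum_fiberwise univ jj (fun i => w i • zz i)]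
      refine Finset.sum_congr rfl fun j0 _ => ?_
      rw [htdef, Finset.sum_smul]
      refine Finset.sum_congr rfl fun i hi => ?_
      rw [Finset.mem_filter] at hi
      rw [← hi.2]
      exact congrArg (fun u => w i • u) (hjj i)
    have hlift : castR (liftZ a) = ∑ j0, t j0 • e j0 := by
      funext i
      refine Fin.lastCases ?_ (fun i' => ?_) i
      · have : castR (liftZ a) (Fin.last d) = 1 := by simp [castR, liftZ_last]
        rw [this]
        rw [Finset.sum_apply]
        simp only [Pi.smul_apply, smul_eq_mul, hedef]
        have : ∀ j0 : Fin (d + 1), castR (g j0) (Fin.last d) = 1 := by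
          intro j0; simp [castR, hgdef, liftZ_last]
        rw [Finset.sum_congr rfl fun j0 _ => by rw [this j0, mul_one]]
        exact ht1.symm
      · have hL : castR (liftZ a) (Fin.castSucc i') = castR a i' := by
          simp [castR, liftZ_castSucc]
        rw [hL, ← htsum, Finset.sum_apply, Finset.sum_apply]
        refine Finset.sum_congr rfl fun j0 _ => ?_
        simp [hedef, castR, hgdef, liftZ_castSucc]
    rw [hlift, hreprSum]
    exact ht0 j
  -- coordinates of cone elements are nonnegative
  have hcone : ∀ y ∈ coneOf A, ∀ j, 0 ≤ B.repr (castR y) j := by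
    intro y hy
    refine AddSubmonoid.closure_induction ?_ ?_ ?_ hy
    · rintro _ ⟨a, ha, rfl⟩; exact hgen a ha
    · intro j; simp [castR_zero]
    · intro y1 y2 _ _ h1 h2 j
      rw [castR_add, map_add]
      exact add_nonneg (h1 j) (h2 j)
  -- the key lemma: lattice points of the cone of positive height can be reduced
  have hkey : ∀ z : Fin (d + 1) → ℤ, z ∈ Λ → z ∈ coneOf A → 1 ≤ z (Fin.last d) →
      ∃ j0, z - g j0 ∈ coneOf A := by
    intro z hzΛ hzC hzh
    have hz' : z ∈ Submodule.span ℤ (Set.range g) := by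
      rw [hΛdef, ← Submodule.span_int_eq_addSubgroupClosure] at hzΛ
      exact hzΛ
    obtain ⟨c, hc⟩ := (Submodule.mem_span_range_iff_exists_fun ℤ).mp hz'
    have hcast : castR z = ∑ j, (c j : ℝ) • e j := by
      rw [← hc]
      have : castR (∑ j, c j • g j) = ∑ j, castR (c j • g j) := by
        funext i
        simp [castR, Finset.sum_apply]
      rw [this]
      exact Finset.sum_congr rfl fun j _ => castR_zsmul _ _
    have hc0 : ∀ j, 0 ≤ c j := by
      intro j
      have h2 := hcone z hzC j
      rw [hcast, hreprSum] at h2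
      exact_mod_cast h2
    have hheight : ∑ j, c j = z (Fin.last d) := by
      rw [← hc, Finset.sum_apply]
      refine Finset.sum_congr rfl fun j _ => ?_
      simp [hgdef, liftZ_last]
    have hex : ∃ j0, 1 ≤ c j0 := by
      by_contra hno
      push_neg at hno
      have : ∑ j, c j ≤ 0 := Finset.sum_nonpos fun j _ => by have := hno j; omega
      omega
    obtain ⟨j0, hj0⟩ := hex
    refine ⟨j0, ?_⟩
    have heq : z - g j0 = ∑ j, (c j - if j = j0 then 1 else 0) • g j := by
      have h1 : ∑ j, (c j - if j = j0 then 1 else 0) • g j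
          = (∑ j, c j • g j) - ∑ j, (if j = j0 then (1 : ℤ) else 0) • g j := by
        rw [← Finset.sum_sub_distrib]
        exact Finset.sum_congr rfl fun j _ => by rw [sub_smul]
      rw [h1, hc]
      congr 1
      simp [ite_smul]
    rw [heq]
    refine AddSubmonoid.sum_mem _ fun j _ => ?_
    have hnn : 0 ≤ c j - if j = j0 then 1 else 0 := by
      split_ifs with h
      · subst h; omega
      · simpa using hc0 j
    have : (c j - if j = j0 then 1 else 0) • g j
        = ((c j - if j = j0 then 1 else 0).toNat) • g j := by
      rw [← natCast_zsmul, Int.toNat_of_nonneg hnn]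
    rw [this]
    have hgj : g j ∈ liftZ '' A := ⟨v j, hvA j, rfl⟩
    exact AddSubmonoid.nsmul_mem _ (AddSubmonoid.subset_closure hgj) _
  -- the quotient is finite
  have htor : ∀ y : Fin (d + 1) → ℤ, M.det • y ∈ Λ := by
    intro y
    have h1 : M.mulVec ((M.adjugate).mulVec y) = M.det • y := by
      rw [Matrix.mulVec_mulVec, Matrix.mul_adjugate, Matrix.smul_mulVec,
        Matrix.one_mulVec]
    rw [← h1, hmulVec]
    exact AddSubgroup.sum_mem _ fun j _ =>
      AddSubgroup.zsmul_mem _ (AddSubgroup.subset_closure (Set.mem_range_self j)) _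
  have hQfin : Finite ((Fin (d + 1) → ℤ) ⧸ Λ) := by
    haveI : AddGroup.FG (Fin (d + 1) → ℤ) := Module.Finite.iff_addGroup_fg.mp inferInstance
    refine AddCommGroup.finite_of_fg_torsion _ fun q => ?_
    induction q using QuotientAddGroup.induction_on with
    | H y =>
      rw [isOfFinAddOrder_iff_nsmul_eq_zero]
      refine ⟨M.det.natAbs, Int.natAbs_pos.mpr hdet, ?_⟩
      have h2 : ((M.det.natAbs : ℤ) • y) ∈ Λ := by
        rcases Int.natAbs_eq M.det with h | h
        · rw [← h]; exact htor y
        · have h4 : (M.det.natAbs : ℤ) • y = -(M.det • y) := by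
            rw [← neg_smul]
            congr 1
            omega
          rw [h4]
          exact AddSubgroup.neg_mem _ (htor y)
      rw [← QuotientAddGroup.mk_nsmul Λ y M.det.natAbs, QuotientAddGroup.eq_zero_iff]
      simpa using h2
  -- main pigeonhole argument
  by_contra hcon
  push_neg at hcon
  set N : ℕ := Λ.index with hNdef
  have hNle : (N : ℤ) ≤ x (Fin.last d) := by omega
  obtain ⟨l, hl, hlsum⟩ := AddSubmonoid.exists_list_of_mem_closure hx
  have hlen : x (Fin.last d) = l.length := by
    rw [← hlsum]; exact sum_last_eq_length A l hl
  have hNlen : N ≤ l.length := by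
    rw [hlen] at hNle; exact_mod_cast hNle
  haveI := Fintype.ofFinite ((Fin (d + 1) → ℤ) ⧸ Λ)
  have hcard : Fintype.card ((Fin (d + 1) → ℤ) ⧸ Λ) < Fintype.card (Fin (N + 1)) := by
    rw [Fintype.card_fin, ← Nat.card_eq_fintype_card, ← AddSubgroup.index_eq_card]
    omega
  obtain ⟨a, b, hab, hfab⟩ := Fintype.exists_ne_map_eq_of_card_lt
    (fun k : Fin (N + 1) => ((QuotientAddGroup.mk ((l.take (k : ℕ)).sum)) :
      (Fin (d + 1) → ℤ) ⧸ Λ)) hcard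
  have hex2 : ∃ i j : Fin (N + 1), (i : ℕ) < (j : ℕ) ∧
      ((QuotientAddGroup.mk ((l.take (i : ℕ)).sum)) : (Fin (d + 1) → ℤ) ⧸ Λ)
        = QuotientAddGroup.mk ((l.take (j : ℕ)).sum) := by
    rcases lt_or_gt_of_ne hab with h | h
    · exact ⟨a, b, h, hfab⟩
    · exact ⟨b, a, h, hfab.symm⟩
  obtain ⟨i, j, hij, hmk⟩ := hex2
  have hjN : (j : ℕ) ≤ l.length := le_trans (Nat.le_of_lt_succ j.isLt) hNlen
  set l2 : List (Fin (d + 1) → ℤ) := (l.drop (i : ℕ)).take ((j : ℕ) - (i : ℕ)) with hl2def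
  have hsplit : l.take (j : ℕ) = l.take (i : ℕ) ++ l2 := by
    rw [hl2def, ← List.take_add]
    congr 1
    omega
  set z : Fin (d + 1) → ℤ := l2.sum with hzdef
  have hsumj : (l.take (j : ℕ)).sum = (l.take (i : ℕ)).sum + z := by
    rw [hsplit, List.sum_append]
  have hz1 : z ∈ Λ := by
    have h2 := QuotientAddGroup.eq.mp hmk
    have h3 : -(l.take (i : ℕ)).sum + (l.take (j : ℕ)).sum = z := by
      rw [hsumj]; abel
    rw [← h3]
    exact h2
  have hl2mem : ∀ w ∈ l2, w ∈ liftZ '' A := fun w hw =>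
    hl w (List.mem_of_mem_drop (List.mem_of_mem_take hw))
  have hz2 : z ∈ coneOf A := AddSubmonoid.list_sum_mem _ fun w hw =>
    AddSubmonoid.subset_closure (hl2mem w hw)
  have hl2len : l2.length = (j : ℕ) - (i : ℕ) := by
    rw [hl2def, List.length_take, List.length_drop]
    omega
  have hzht : 1 ≤ z (Fin.last d) := by
    rw [hzdef, sum_last_eq_length A l2 hl2mem, hl2len]
    omega
  obtain ⟨j0, hj0⟩ := hkey z hz1 hz2 hzht
  apply hmin j0
  have hx2 : x = (l.take (i : ℕ)).sum + z + (l.drop (j : ℕ)).sum := by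
    rw [← hlsum]
    conv_lhs => rw [← List.take_append_drop (j : ℕ) l]
    rw [List.sum_append, hsumj]
  have hxz : x - g j0 = ((l.take (i : ℕ)).sum + (l.drop (j : ℕ)).sum) + (z - g j0) := by
    rw [hx2]; abel
  show x - g j0 ∈ coneOf A
  rw [hxz]
  refine AddSubmonoid.add_mem _ (AddSubmonoid.add_mem _ ?_ ?_) hj0
  · exact AddSubmonoid.list_sum_mem _ fun w hw =>
      AddSubmonoid.subset_closure (hl w (List.mem_of_mem_take hw))
  · exact AddSubmonoid.list_sum_mem _ fun w hw =>
      AddSubmonoid.subset_closure (hl w (List.mem_of_mem_drop hw))
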